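/- In the ARIG algorithm, if f has L-Lipschitz gradient and the gradient error thresholds satisfy ω_g^k ≤ 1/σ_k, then the regularization parameters satisfy σ_k ≤ max(σ₀, γ₃(L/2 + 1)/(1 − η₂)) for all k ≥ 0. -/

import Mathlib

open InnerProductSpace

lemma descent_lemma {n : ℕ} (f : EuclideanSpace ℝ (Fin n) → ℝ)
    (f' : EuclideanSpace ℝ (Fin n) → EuclideanSpace ℝ (Fin n)) (L : ℝ) (hL : 0 ≤ L)
    (hf' : ∀ y, HasGradientAt f (f' y) y) (hLip : LipschitzWith (Real.toNNReal L) f')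
    (x v : EuclideanSpace ℝ (Fin n)) :
    f (x + v) ≤ f x + inner ℝ (f' x) v + L / 2 * ‖v‖ ^ 2 := by
  set F : ℝ → ℝ := fun t => f (x + t • v) - t * (inner ℝ (f' x) v : ℝ) - L / 2 * t ^ 2 * ‖v‖ ^ 2
    with hF
  have hderiv : ∀ t : ℝ, HasDerivAt F
      ((inner ℝ (f' (x + t • v)) v : ℝ) - (inner ℝ (f' x) v : ℝ) - L * t * ‖v‖ ^ 2) t := by
    intro t
    have h1 : HasDerivAt (fun t : ℝ => x + t • v) v t := by
      simpa using ((hasDerivAt_id t).smul_const v).const_add x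
    have h2 : HasDerivAt (fun t : ℝ => f (x + t • v)) ((inner ℝ (f' (x + t • v)) v : ℝ)) t := by
      have := ((hf' (x + t • v)).hasFDerivAt).comp_hasDerivAt t h1
      exact this
    have h3 : HasDerivAt (fun t : ℝ => t * (inner ℝ (f' x) v : ℝ)) ((inner ℝ (f' x) v : ℝ)) t := by
      simpa using (hasDerivAt_id t).mul_const _
    have h4 : HasDerivAt (fun t : ℝ => L / 2 * t ^ 2 * ‖v‖ ^ 2)
        (L / 2 * (↑2 * t ^ 1) * ‖v‖ ^ 2) t :=
      ((hasDerivAt_pow 2 t).const_mul (L / 2)).mul_const (‖v‖ ^ 2)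
    have h5 := (h2.sub h3).sub h4
    exact h5.congr_deriv (by ring)
  have hmono : AntitoneOn F (Set.Icc 0 1) := by
    apply antitoneOn_of_deriv_nonpos (convex_Icc 0 1)
    · exact fun t _ => ((hderiv t).differentiableAt).continuousAt.continuousWithinAt
    · exact fun t _ => ((hderiv t).differentiableAt).differentiableWithinAt
    · intro t ht
      rw [interior_Icc] at ht
      rw [(hderiv t).deriv]
      have hb : (inner ℝ (f' (x + t • v)) v : ℝ) - (inner ℝ (f' x) v : ℝ)
          = (inner ℝ (f' (x + t • v) - f' x) v : ℝ) := by rw [inner_sub_left]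
      have h1 : (inner ℝ (f' (x + t • v) - f' x) v : ℝ) ≤ ‖f' (x + t • v) - f' x‖ * ‖v‖ :=
        real_inner_le_norm _ _
      have h2 : ‖f' (x + t • v) - f' x‖ ≤ L * (t * ‖v‖) := by
        have := hLip.dist_le_mul (x + t • v) x
        rw [dist_eq_norm, dist_eq_norm] at this
        have h3 : x + t • v - x = t • v := by abel
        rw [h3, norm_smul] at this
        rw [Real.coe_toNNReal L hL] at this
        calc ‖f' (x + t • v) - f' x‖ ≤ L * (‖t‖ * ‖v‖) := this
          _ = L * (t * ‖v‖) := by rw [Real.norm_eq_abs, abs_of_nonneg ht.1.le]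
      nlinarith [norm_nonneg v, norm_nonneg (f' (x + t • v) - f' x), ht.1.le, hL]
  have hFle := hmono (Set.left_mem_Icc.2 zero_le_one) (Set.right_mem_Icc.2 zero_le_one) zero_le_one
  have h0 : F 0 = f x := by simp [hF]
  have h1 : F 1 = f (x + v) - (inner ℝ (f' x) v : ℝ) - L / 2 * ‖v‖ ^ 2 := by
    simp [hF]
  rw [h0, h1] at hFle
  linarith



theorem stmt_1 {n : ℕ} (f : EuclideanSpace ℝ (Fin n) → ℝ)
    (f' : EuclideanSpace ℝ (Fin n) → EuclideanSpace ℝ (Fin n))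
    (L σmin η₁ η₂ γ₁ γ₂ γ₃ : ℝ)
    (x g s : ℕ → EuclideanSpace ℝ (Fin n)) (σ ω ρ : ℕ → ℝ)
    (hf : ContDiff ℝ 1 f)
    (hf' : ∀ y, HasGradientAt f (f' y) y)
    (hL : 0 < L) (hLip : LipschitzWith (Real.toNNReal L) f')
    (hσmin : 0 < σmin) (hσ0 : σmin ≤ σ 0)
    (hη1 : 0 < η₁) (hη12 : η₁ ≤ η₂) (hη2 : η₂ < 1)
    (hγ1 : 0 < γ₁) (hγ1' : γ₁ < 1) (hγ2 : 1 < γ₂) (hγ23 : γ₂ < γ₃)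
    (hg : ∀ k, g k ≠ 0)
    (hω : ∀ k, 0 < ω k) (hωσ : ∀ k, ω k ≤ 1 / σ k)
    (herr : ∀ k, ‖g k - f' (x k)‖ ≤ ω k * ‖g k‖)
    (hs : ∀ k, s k = -(1 / σ k) • g k)
    (hρ : ∀ k, ρ k = (f (x k) - f (x k + s k)) / ((1 / σ k) * ‖g k‖ ^ 2))
    (hx : ∀ k, x (k + 1) = if η₁ ≤ ρ k then x k + s k else x k)
    (hupd : ∀ k,
      (η₂ ≤ ρ k → max σmin (γ₁ * σ k) ≤ σ (k + 1) ∧ σ (k + 1) ≤ σ k) ∧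
      (η₁ ≤ ρ k → ρ k < η₂ → σ k ≤ σ (k + 1) ∧ σ (k + 1) ≤ γ₂ * σ k) ∧
      (ρ k < η₁ → γ₂ * σ k ≤ σ (k + 1) ∧ σ (k + 1) ≤ γ₃ * σ k)) :
    ∀ k, σ k ≤ max (σ 0) (γ₃ * (L / 2 + 1) / (1 - η₂)) := by
  have hσpos : ∀ k, 0 < σ k := by
    intro k
    induction k with
    | zero => linarith
    | succ k ih =>
      obtain ⟨h1, h2, h3⟩ := hupd k
      rcases lt_or_ge (ρ k) η₁ with h | h
      · have := (h3 h).1; nlinarith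
      rcases lt_or_ge (ρ k) η₂ with h' | h'
      · have := (h2 h h').1; linarith
      · have := le_trans (le_max_left σmin (γ₁ * σ k)) (h1 h').1; linarith
  have hη2' : 0 < 1 - η₂ := by linarith
  set B := γ₃ * (L / 2 + 1) / (1 - η₂) with hB
  have hγ3 : 0 < γ₃ := by linarith
  -- key: if σ k is large, step is successful
  have key : ∀ k, (L / 2 + 1) / (1 - η₂) ≤ σ k → η₂ ≤ ρ k := by
    intro k hk
    have hσk := hσpos k
    have hA : 0 < 1 / σ k := by positivity
    have hG : 0 < ‖g k‖ ^ 2 := pow_pos (norm_pos_iff.2 (hg k)) 2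
    have hdesc := descent_lemma f f' L hL.le hf' hLip (x k) (s k)
    have hinner : (inner ℝ (f' (x k)) (s k) : ℝ) = -(1 / σ k) * (inner ℝ (f' (x k)) (g k) : ℝ) := by
      rw [hs k, real_inner_smul_right]
    have hns : ‖s k‖ ^ 2 = (1 / σ k) ^ 2 * ‖g k‖ ^ 2 := by
      rw [hs k, norm_smul]
      rw [Real.norm_eq_abs, abs_neg, abs_of_nonneg hA.le]
      ring
    have hip : (1 - 1 / σ k) * ‖g k‖ ^ 2 ≤ (inner ℝ (f' (x k)) (g k) : ℝ) := by
      have e1 : (inner ℝ (f' (x k)) (g k) : ℝ)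
          = ‖g k‖ ^ 2 - (inner ℝ (g k - f' (x k)) (g k) : ℝ) := by
        rw [inner_sub_left, real_inner_self_eq_norm_sq]; ring
      have e2 : (inner ℝ (g k - f' (x k)) (g k) : ℝ) ≤ ‖g k - f' (x k)‖ * ‖g k‖ :=
        real_inner_le_norm _ _
      have e3 := herr k
      have e4 := hωσ k
      have e5 : (0:ℝ) ≤ ‖g k‖ := norm_nonneg _
      nlinarith
    -- lower bound on decrease
    have hdec : (1 / σ k) * (1 - 1 / σ k) * ‖g k‖ ^ 2 - L / 2 * (1 / σ k) ^ 2 * ‖g k‖ ^ 2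
        ≤ f (x k) - f (x k + s k) := by
      rw [hinner, hns] at hdesc
      nlinarith
    rw [hρ k, le_div_iff₀ (by positivity)]
    have hAL : (1 / σ k) * (L / 2 + 1) ≤ 1 - η₂ := by
      rw [div_le_iff₀ hη2'] at hk
      rw [div_mul_eq_mul_div, div_le_iff₀ hσk]
      nlinarith
    nlinarith
  intro k
  induction k with
  | zero => exact le_max_left _ _
  | succ k ih =>
    rcases le_or_gt ((L / 2 + 1) / (1 - η₂)) (σ k) with h | h
    · exact le_trans (((hupd k).1 (key k h)).2) ih
    · have hσk := hσpos k
      have hstep : σ (k + 1) ≤ γ₃ * σ k := by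
        obtain ⟨h1, h2, h3⟩ := hupd k
        rcases lt_or_ge (ρ k) η₁ with hc | hc
        · exact (h3 hc).2
        rcases lt_or_ge (ρ k) η₂ with hc' | hc'
        · exact le_trans (h2 hc hc').2 (mul_le_mul_of_nonneg_right hγ23.le hσk.le)
        · exact le_trans (h1 hc').2 (le_mul_of_one_le_left hσk.le (by linarith))
      have : σ (k + 1) ≤ γ₃ * ((L / 2 + 1) / (1 - η₂)) :=
        le_trans hstep (mul_le_mul_of_nonneg_left h.le hγ3.le)
      refine le_trans this (le_trans (le_of_eq ?_) (le_max_right _ _))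
      rw [hB, mul_div_assoc]
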